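/- Let A ∈ V_0 ⊗ ⋯ ⊗ V_p be a nondegenerate matrix of boundary format, let (φ, v_j, h) be a (j)-weak jumping hyperplane for A, and let v_0 ∈ V_0 be a vector with φ(v_0) = 1. Then the elementary transformation A'_j ∈ (V_0/ℂv_0) ⊗ V_1 ⊗ ⋯ ⊗ (V_j/ℂv_j) ⊗ ⋯ ⊗ V_p is again a matrix of boundary format, and it is nondegenerate. -/

import Mathlib

open Module Finset

variable {p : ℕ} {V : Fin (p + 1) → Type*}
  [∀ j, AddCommGroup (V j)] [∀ j, Module ℂ (V j)] [∀ j, FiniteDimensional ℂ (V j)]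

/-- Nondegeneracy of a `(p+1)`-dimensional matrix, viewed as a multilinear form on duals. -/
def TensorNondegenerate (A : MultilinearMap ℂ (fun j : Fin (p + 1) => Module.Dual ℂ (V j)) ℂ) :
    Prop :=
  ∀ j : Fin (p + 1), j ≠ 0 →
    ∀ ξ : ∀ i, Module.Dual ℂ (V i), (∀ i, i ≠ 0 → i ≠ j → ξ i ≠ 0) →
      ∀ v : V j, ∃ φ : Module.Dual ℂ (V 0),
        ∀ lam : Module.Dual ℂ (V j),
          A (Function.update (Function.update ξ 0 φ) j lam) = lam v

/-- `(φ, vj, h)` is a `(j)`-weak jumping hyperplane for `A`: `φ`, `vj`, `h` are nonzero and the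
contraction `(φ ⊗ id)(A)` equals `vj ⊗ h`, where the tensor
`h ∈ V 1 ⊗ ⋯ ⊗ V (j-1) ⊗ V (j+1) ⊗ ⋯ ⊗ V p` is viewed as a multilinear form on the duals of
the remaining factors. -/
def IsWeakJump (j : Fin (p + 1))
    (A : MultilinearMap ℂ (fun i : Fin (p + 1) => Module.Dual ℂ (V i)) ℂ)
    (φ : Module.Dual ℂ (V 0)) (vj : V j)
    (h : MultilinearMap ℂ
      (fun i : {i : Fin (p + 1) // i ≠ 0 ∧ i ≠ j} => Module.Dual ℂ (V i)) ℂ) : Prop :=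
  φ ≠ 0 ∧ vj ≠ 0 ∧ h ≠ 0 ∧
    ∀ ξ : ∀ i, Module.Dual ℂ (V i),
      A (Function.update ξ 0 φ) = ξ j vj * h (fun i => ξ i)

lemma factor_through {M N : Type*} [AddCommGroup M] [Module ℂ M] [AddCommGroup N] [Module ℂ N]
    (f : M →ₗ[ℂ] N) (hf : Function.Surjective f) (g : M →ₗ[ℂ] ℂ)
    (hle : LinearMap.ker f ≤ LinearMap.ker g) :
    ∃ g' : N →ₗ[ℂ] ℂ, ∀ x, g' (f x) = g x := by
  let e := f.quotKerEquivOfSurjective hf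
  refine ⟨((LinearMap.ker f).liftQ g hle).comp e.symm.toLinearMap, fun x => ?_⟩
  have h1 : e ((LinearMap.ker f).mkQ x) = f x := by
    simp [e, LinearMap.quotKerEquivOfSurjective]
  have h2 : e.symm (f x) = (LinearMap.ker f).mkQ x := by
    rw [← h1, LinearEquiv.symm_apply_apply]
  simp [h2]


/-- Let `A` be a nondegenerate boundary format matrix, `(φ, vj, h)` a
`(j)`-weak jumping hyperplane and `v₀ ∈ V 0` with `φ v₀ = 1`.  The elementary transformation
`A'` of `A` — the image of `A` in `(V 0 / ℂv₀) ⊗ V 1 ⊗ ⋯ ⊗ (V j / ℂvj) ⊗ ⋯ ⊗ V p`, here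
realized via surjections `π i : V i → W i` with `ker (π 0) = ℂv₀`, `ker (π j) = ℂvj`, and
`π i` bijective for `i ∉ {0, j}` — is again of boundary format and is nondegenerate. -/
theorem elementary_transformation_nondegenerate
    (hp : 2 ≤ p) (k : Fin (p + 1) → ℕ) (hk : ∀ j, 1 ≤ k j)
    (hdim : ∀ j, Module.finrank ℂ (V j) = k j + 1)
    (hbf : k 0 = ∑ j ∈ Finset.univ.erase (0 : Fin (p + 1)), k j)
    (A : MultilinearMap ℂ (fun j : Fin (p + 1) => Module.Dual ℂ (V j)) ℂ)
    (hnd : TensorNondegenerate A)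
    (j : Fin (p + 1)) (hj : j ≠ 0)
    (φ : Module.Dual ℂ (V 0)) (vj : V j)
    (h : MultilinearMap ℂ
      (fun i : {i : Fin (p + 1) // i ≠ 0 ∧ i ≠ j} => Module.Dual ℂ (V i)) ℂ)
    (hjump : IsWeakJump j A φ vj h)
    (v₀ : V 0) (hv₀ : φ v₀ = 1)
    (W : Fin (p + 1) → Type*) [∀ i, AddCommGroup (W i)] [∀ i, Module ℂ (W i)]
    (π : ∀ i, V i →ₗ[ℂ] W i) (hsurj : ∀ i, Function.Surjective (π i))
    (hker0 : LinearMap.ker (π 0) = Submodule.span ℂ {v₀})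
    (hkerj : LinearMap.ker (π j) = Submodule.span ℂ {vj})
    (hkero : ∀ i, i ≠ 0 → i ≠ j → LinearMap.ker (π i) = ⊥) :
    (∀ i, Module.finrank ℂ (W i) =
        (if i = 0 then k 0 - 1 else if i = j then k j - 1 else k i) + 1) ∧
    ((k 0 - 1 : ℕ) = ∑ i ∈ Finset.univ.erase (0 : Fin (p + 1)),
        (if i = j then k i - 1 else k i)) ∧
    TensorNondegenerate (A.compLinearMap fun i => (π i).dualMap) := by
  have hv₀ne : v₀ ≠ 0 := by
    intro hc; rw [hc, map_zero] at hv₀; exact one_ne_zero hv₀.symm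
  have hvjne : vj ≠ 0 := hjump.2.1
  have hπjvj : π j vj = 0 := by
    have : vj ∈ LinearMap.ker (π j) := hkerj ▸ Submodule.mem_span_singleton_self vj
    exact LinearMap.mem_ker.1 this
  have hrank : ∀ i, Module.finrank ℂ (V i)
      = Module.finrank ℂ (W i) + Module.finrank ℂ (LinearMap.ker (π i)) := by
    intro i
    have := LinearMap.finrank_range_add_finrank_ker (π i)
    rw [LinearMap.range_eq_top.2 (hsurj i), finrank_top] at this
    exact this.symm
  refine ⟨?_, ?_, ?_⟩
  · intro i
    by_cases h0 : i = 0
    · subst h0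
      have := hrank 0
      rw [hker0, finrank_span_singleton hv₀ne, hdim 0] at this
      have h1 := hk 0
      rw [if_pos rfl]
      omega
    · by_cases hJ : i = j
      · subst hJ
        have := hrank i
        rw [hkerj, finrank_span_singleton hvjne, hdim i] at this
        have h1 := hk i
        rw [if_neg h0, if_pos rfl]
        omega
      · have := hrank i
        rw [hkero i h0 hJ, finrank_bot, hdim i] at this
        rw [if_neg h0, if_neg hJ]
        omega
  · have hjmem : j ∈ Finset.univ.erase (0 : Fin (p + 1)) :=
      Finset.mem_erase.2 ⟨hj, Finset.mem_univ j⟩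
    have h2 : ∑ i ∈ Finset.univ.erase (0 : Fin (p + 1)), (if i = j then k i - 1 else k i)
        = (k j - 1) + ∑ i ∈ (Finset.univ.erase (0 : Fin (p + 1))).erase j, k i := by
      rw [← Finset.add_sum_erase _ _ hjmem, if_pos rfl]
      exact congrArg _ (Finset.sum_congr rfl fun x hx => if_neg (Finset.mem_erase.1 hx).1)
    have h1 : k 0 = k j + ∑ i ∈ (Finset.univ.erase (0 : Fin (p + 1))).erase j, k i := by
      rw [hbf, ← Finset.add_sum_erase _ k hjmem]
    have h3 := hk j
    omega
  · intro j' hj' ξ' hξ' w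
    set ξ : ∀ i, Module.Dual ℂ (V i) := fun i => (ξ' i).comp (π i) with hξdef
    have hξ : ∀ i, i ≠ 0 → i ≠ j' → ξ i ≠ 0 := by
      intro i h0 hJ hc
      refine hξ' i h0 hJ ?_
      ext y
      obtain ⟨x, rfl⟩ := hsurj i y
      simpa [hξdef] using DFunLike.congr_fun hc x
    obtain ⟨v, hv⟩ := hsurj j' w
    obtain ⟨φ', hφ'⟩ := hnd j' hj' ξ hξ v
    set φ'' : Module.Dual ℂ (V 0) := φ' - (φ' v₀) • φ with hφ''def
    have hle : LinearMap.ker (π 0) ≤ LinearMap.ker φ'' := by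
      rw [hker0, Submodule.span_le, Set.singleton_subset_iff]
      simp [φ'', hv₀]
    obtain ⟨ψ, hψ⟩ := factor_through (π 0) (hsurj 0) φ'' hle
    refine ⟨ψ, fun lam' => ?_⟩
    have key : (fun i => (π i).dualMap
          ((Function.update (Function.update ξ' 0 ψ) j' lam') i))
        = Function.update (Function.update ξ j' ((lam').comp (π j'))) 0 (ψ.comp (π 0)) := by
      funext i
      by_cases h0 : i = 0
      · subst h0
        rw [Function.update_of_ne (Ne.symm hj'), Function.update_self,
          Function.update_self]
        rfl
      · by_cases hJ : i = j'
        · subst hJ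
          rw [Function.update_self, Function.update_of_ne h0, Function.update_self]
          rfl
        · rw [Function.update_of_ne hJ, Function.update_of_ne h0,
            Function.update_of_ne h0, Function.update_of_ne hJ]
          rfl
    have hψeq : ψ.comp (π 0) = φ'' := LinearMap.ext hψ
    have hjterm : A (Function.update (Function.update ξ j' (lam'.comp (π j'))) 0 φ) = 0 := by
      rw [hjump.2.2.2 (Function.update ξ j' (lam'.comp (π j')))]
      have : (Function.update ξ j' (lam'.comp (π j'))) j vj = 0 := by
        by_cases hJ : j = j'
        · subst hJ
          rw [Function.update_self]
          simp [hπjvj]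
        · rw [Function.update_of_ne hJ]
          simp [hξdef, hπjvj]
      rw [this, zero_mul]
    calc A.compLinearMap (fun i => (π i).dualMap)
          (Function.update (Function.update ξ' 0 ψ) j' lam')
        = A (Function.update (Function.update ξ j' ((lam').comp (π j'))) 0 (ψ.comp (π 0))) := by
          rw [MultilinearMap.compLinearMap_apply, key]
      _ = A (Function.update (Function.update ξ j' ((lam').comp (π j'))) 0 φ')
            - (φ' v₀) • A (Function.update (Function.update ξ j' ((lam').comp (π j'))) 0 φ) := by
          rw [hψeq, hφ''def, MultilinearMap.map_update_sub, MultilinearMap.map_update_smul]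
      _ = lam' w := by
          rw [hjterm, Function.update_comm hj', hφ' (lam'.comp (π j'))]
          simp [hv]
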